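/- Let A be a finitely graded k-algebra with Hilbert series h_A(t) = 1/p(t) for a polynomial p(t) ∈ ℤ[t] with constant term 1. If p has a complex root r with |r| < 1, then A has exponential growth: limsup_n (dim_k A_0 + ... + dim_k A_n)^{1/n} > 1. -/

import Mathlib

open Filter in
/-- Let `A` be a finitely graded `k`-algebra with Hilbert series `h_A(t) = 1/p(t)`
for a polynomial `p ∈ ℤ[t]` with constant term `1`.  If `p` has a complex root `r`
with `|r| < 1`, then `A` has exponential growth:
`limsup_n (dim A_0 + ⋯ + dim A_n)^{1/n} > 1`. -/
theorem stmt_9 {k A : Type*} [Field k] [Ring A] [Algebra k A]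
    (𝒜 : ℕ → Submodule k A) [GradedAlgebra 𝒜]
    (hconn : 𝒜 0 = Submodule.span k {(1 : A)})
    (hfg : Algebra.FiniteType k A)
    (p : Polynomial ℤ) (hp0 : p.coeff 0 = 1)
    (hhilb : (PowerSeries.mk fun n : ℕ => (Module.finrank k (𝒜 n) : ℤ)) *
      (p : PowerSeries ℤ) = 1)
    (hroot : ∃ r : ℂ, ‖r‖ < 1 ∧ Polynomial.aeval r p = 0) :
    1 < Filter.limsup (fun n : ℕ =>
      ((∑ i ∈ Finset.range (n + 1), Module.finrank k (𝒜 i) : ℕ) : ℝ) ^ ((n : ℝ)⁻¹))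
      Filter.atTop := by
  classical
  obtain ⟨r, hr1, hrz⟩ := hroot
  by_contra hcon
  push_neg at hcon
  set a : ℕ → ℕ := fun n => Module.finrank k (𝒜 n) with ha
  set S : ℕ → ℕ := fun n => ∑ i ∈ Finset.range (n + 1), a i with hS
  set u : ℕ → ℝ := fun n => ((S n : ℕ) : ℝ) ^ ((n : ℝ)⁻¹) with hu
  -- coefficient identity
  have hc : ∀ n : ℕ, ∑ x ∈ Finset.HasAntidiagonal.antidiagonal n, (a x.1 : ℤ) * p.coeff x.2
      = if n = 0 then 1 else 0 := by
    intro n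
    have h := congrArg (PowerSeries.coeff n) hhilb
    simpa [PowerSeries.coeff_mul, PowerSeries.coeff_one, Polynomial.coeff_coe] using h
  have hcr : ∀ n : ℕ, ∑ j ∈ Finset.range (n + 1), (a j : ℤ) * p.coeff (n - j)
      = if n = 0 then 1 else 0 := by
    intro n
    rw [← Finset.Nat.sum_antidiagonal_eq_sum_range_succ_mk
      (fun x => (a x.1 : ℤ) * p.coeff x.2)]
    exact hc n
  have a0 : a 0 = 1 := by
    have h := hcr 0
    simp [hp0] at h
    exact_mod_cast h
  -- recursion
  have hrec : ∀ m : ℕ, (a (m + 1) : ℤ)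
      = - ∑ j ∈ Finset.range (m + 1), (a j : ℤ) * p.coeff (m + 1 - j) := by
    intro m
    have h := hcr (m + 1)
    rw [Finset.sum_range_succ] at h
    simp [hp0] at h
    linarith
  -- crude exponential bound
  set T : ℝ := ∑ j ∈ p.support, |((p.coeff j : ℤ) : ℝ)| with hT
  have hT0 : 0 ≤ T := Finset.sum_nonneg fun _ _ => abs_nonneg _
  set M : ℝ := T + 1 with hM
  have hM1 : (1 : ℝ) ≤ M := by simp [hM]; linarith
  have hM0 : (0 : ℝ) ≤ M := by linarith
  have hsub : ∀ s : Finset ℕ, ∑ j ∈ s, |((p.coeff j : ℤ) : ℝ)| ≤ T := by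
    intro s
    have h1 : ∑ j ∈ s, |((p.coeff j : ℤ) : ℝ)|
        ≤ ∑ j ∈ s ∪ p.support, |((p.coeff j : ℤ) : ℝ)| :=
      Finset.sum_le_sum_of_subset_of_nonneg Finset.subset_union_left
        (fun _ _ _ => abs_nonneg _)
    have h2 : ∑ j ∈ p.support, |((p.coeff j : ℤ) : ℝ)|
        = ∑ j ∈ s ∪ p.support, |((p.coeff j : ℤ) : ℝ)| := by
      refine Finset.sum_subset Finset.subset_union_right ?_
      intro j _ hj
      simp [Polynomial.notMem_support_iff.mp hj]
    rw [hT, h2]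
    exact h1
  have habd : ∀ n : ℕ, (a n : ℝ) ≤ M ^ n := by
    intro n
    induction n using Nat.strong_induction_on with
    | _ n ih =>
      match n with
      | 0 => simp [a0]
      | Nat.succ m =>
        have h1 : (a (m + 1) : ℝ)
            = - ∑ j ∈ Finset.range (m + 1), (a j : ℝ) * ((p.coeff (m + 1 - j) : ℤ) : ℝ) := by
          exact_mod_cast hrec m
        have h2 : (a (m + 1) : ℝ)
            ≤ ∑ j ∈ Finset.range (m + 1), (a j : ℝ) * |((p.coeff (m + 1 - j) : ℤ) : ℝ)| := by
          rw [h1]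
          refine (neg_le_abs _).trans ?_
          refine (Finset.abs_sum_le_sum_abs _ _).trans ?_
          refine Finset.sum_le_sum fun i _ => ?_
          rw [abs_mul, abs_of_nonneg (by positivity : (0:ℝ) ≤ (a i : ℝ))]
        have h3 : ∑ j ∈ Finset.range (m + 1), (a j : ℝ) * |((p.coeff (m + 1 - j) : ℤ) : ℝ)|
            ≤ M ^ m * ∑ j ∈ Finset.range (m + 1), |((p.coeff (m + 1 - j) : ℤ) : ℝ)| := by
          rw [Finset.mul_sum]
          refine Finset.sum_le_sum fun i hi => ?_
          have hi' : i < m + 1 := Finset.mem_range.mp hi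
          have hia : (a i : ℝ) ≤ M ^ i := ih i (by omega)
          have him : M ^ i ≤ M ^ m := pow_le_pow_right₀ hM1 (by omega)
          have := abs_nonneg (((p.coeff (m + 1 - i) : ℤ) : ℝ))
          nlinarith
        have h4 : ∑ j ∈ Finset.range (m + 1), |((p.coeff (m + 1 - j) : ℤ) : ℝ)| ≤ T := by
          have hinj : ∀ x ∈ Finset.range (m + 1), ∀ y ∈ Finset.range (m + 1),
              m + 1 - x = m + 1 - y → x = y := by
            intro x hx y hy hxy
            simp only [Finset.mem_range] at hx hy
            omega
          have himg := Finset.sum_image (g := fun j => m + 1 - j)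
            (f := fun j => |((p.coeff j : ℤ) : ℝ)|) (s := Finset.range (m + 1)) hinj
          rw [← himg]
          exact hsub _
        have hMm : (0:ℝ) ≤ M ^ m := pow_nonneg hM0 m
        calc (a (m + 1) : ℝ) ≤ M ^ m * ∑ j ∈ Finset.range (m + 1),
              |((p.coeff (m + 1 - j) : ℤ) : ℝ)| := h2.trans h3
          _ ≤ M ^ m * M := by nlinarith
          _ = M ^ (m + 1) := (pow_succ M m).symm
  -- S bounds
  have hS1 : ∀ n, (1 : ℝ) ≤ (S n : ℝ) := by
    intro n
    have : a 0 ≤ S n :=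
      Finset.single_le_sum (f := fun i => a i) (fun _ _ => Nat.zero_le _)
        (Finset.mem_range.mpr (by omega))
    rw [a0] at this
    exact_mod_cast this
  have hS0 : ∀ n, (0 : ℝ) ≤ (S n : ℝ) := fun n => (zero_le_one.trans (hS1 n))
  have hSM : ∀ n, (S n : ℝ) ≤ (2 * M) ^ n := by
    intro n
    have h1 : (S n : ℝ) = ∑ i ∈ Finset.range (n + 1), (a i : ℝ) := by
      rw [hS]; push_cast; ring
    have h2 : (S n : ℝ) ≤ ∑ i ∈ Finset.range (n + 1), M ^ n := by
      rw [h1]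
      refine Finset.sum_le_sum fun i hi => ?_
      exact (habd i).trans (pow_le_pow_right₀ hM1 (by
        have := Finset.mem_range.mp hi; omega))
    rw [Finset.sum_const, Finset.card_range, nsmul_eq_mul] at h2
    have h3 : ((n : ℝ) + 1) ≤ 2 ^ n := by
      exact_mod_cast Nat.succ_le_of_lt (Nat.lt_two_pow_self (n := n))
    have hMn : (0:ℝ) ≤ M ^ n := pow_nonneg hM0 n
    calc (S n : ℝ) ≤ ((n : ℝ) + 1) * M ^ n := by push_cast at h2 ⊢; linarith
      _ ≤ 2 ^ n * M ^ n := by nlinarith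
      _ = (2 * M) ^ n := (mul_pow 2 M n).symm
  -- boundedness of u
  have hub : ∀ n, u n ≤ 2 * M := by
    intro n
    match n with
    | 0 => simp [hu]; linarith
    | Nat.succ m =>
      have hne : (m + 1 : ℕ) ≠ 0 := by omega
      calc u (m + 1) ≤ ((2 * M) ^ (m + 1)) ^ (((m + 1 : ℕ) : ℝ))⁻¹ :=
            Real.rpow_le_rpow (hS0 _) (hSM _) (by positivity)
        _ = 2 * M := Real.pow_rpow_inv_natCast (by linarith) hne
  have hbdd : Filter.IsBoundedUnder (· ≤ ·) Filter.atTop u :=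
    Filter.isBoundedUnder_of ⟨2 * M, hub⟩
  -- pick c with 1 < c and c * |r| < 1
  have hrne : r ≠ 0 := by
    intro h
    rw [h] at hrz
    simp [Polynomial.aeval_def, Polynomial.eval₂_at_zero, hp0] at hrz
  have hra : 0 < ‖r‖ := norm_pos_iff.mpr hrne
  set c : ℝ := (1 + 1 / ‖r‖) / 2 with hcdef
  have hinv : 1 < 1 / ‖r‖ := by
    rw [lt_div_iff₀ hra]; linarith
  have hc1 : 1 < c := by rw [hcdef]; linarith
  have hcr1 : c * ‖r‖ < 1 := by
    rw [hcdef]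
    have : (1 + 1 / ‖r‖) / 2 * ‖r‖
        = (‖r‖ + 1) / 2 := by field_simp
    rw [this]; linarith
  have hev : ∀ᶠ n in Filter.atTop, u n < c :=
    Filter.eventually_lt_of_limsup_lt (lt_of_le_of_lt hcon hc1) hbdd
  -- summability
  have hfe : ∀ᶠ n in Filter.atTop,
      ‖(a n : ℂ) * r ^ n‖ ≤ (c * ‖r‖) ^ n := by
    filter_upwards [hev, Filter.eventually_ge_atTop 1] with n hn hn1
    have hne : n ≠ 0 := by omega
    have hSn : (S n : ℝ) < c ^ n := by
      have h := Real.rpow_inv_natCast_pow (hS0 n) hne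
      calc (S n : ℝ) = (((S n : ℝ)) ^ ((n : ℝ)⁻¹)) ^ n := h.symm
        _ < c ^ n := pow_lt_pow_left₀ hn (Real.rpow_nonneg (hS0 n) _) hne
    have han : (a n : ℝ) ≤ (S n : ℝ) := by
      exact_mod_cast Finset.single_le_sum (f := fun i => a i)
        (fun _ _ => Nat.zero_le _) (Finset.self_mem_range_succ n)
    have hnorm : ‖(a n : ℂ) * r ^ n‖ = (a n : ℝ) * ‖r‖ ^ n := by
      rw [norm_mul, norm_pow, Complex.norm_natCast]
    rw [hnorm, mul_pow]
    have : (0:ℝ) ≤ ‖r‖ ^ n := by positivity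
    nlinarith
  have hfsum : Summable fun n => ‖(a n : ℂ) * r ^ n‖ := by
    refine Summable.of_norm_bounded_eventually_nat
      (summable_geometric_of_lt_one (by positivity) hcr1) ?_
    filter_upwards [hfe] with n hn
    simpa [norm_norm] using hn
  have hgsum : Summable fun j => ‖((p.coeff j : ℤ) : ℂ) * r ^ j‖ := by
    refine summable_of_ne_finset_zero (s := p.support) fun j hj => ?_
    simp [Polynomial.notMem_support_iff.mp hj]
  -- Cauchy product
  have hprod := tsum_mul_tsum_eq_tsum_sum_antidiagonal_of_summable_norm hfsum hgsum
  have hg0 : (∑' j, ((p.coeff j : ℤ) : ℂ) * r ^ j) = 0 := by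
    have h1 : (∑' j, ((p.coeff j : ℤ) : ℂ) * r ^ j)
        = ∑ j ∈ p.support, ((p.coeff j : ℤ) : ℂ) * r ^ j :=
      tsum_eq_sum (fun j hj => by simp [Polynomial.notMem_support_iff.mp hj])
    rw [h1]
    rw [Polynomial.aeval_def, Polynomial.eval₂_eq_sum, Polynomial.sum_def] at hrz
    simpa using hrz
  have hrhs : (∑' n : ℕ, ∑ kl ∈ Finset.HasAntidiagonal.antidiagonal n,
      ((a kl.1 : ℂ) * r ^ kl.1) * (((p.coeff kl.2 : ℤ) : ℂ) * r ^ kl.2)) = 1 := by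
    have hterm : ∀ n : ℕ, (∑ kl ∈ Finset.HasAntidiagonal.antidiagonal n,
        ((a kl.1 : ℂ) * r ^ kl.1) * (((p.coeff kl.2 : ℤ) : ℂ) * r ^ kl.2))
        = (if n = 0 then 1 else 0 : ℂ) := by
      intro n
      have hstep : ∀ kl ∈ Finset.HasAntidiagonal.antidiagonal n,
          ((a kl.1 : ℂ) * r ^ kl.1) * (((p.coeff kl.2 : ℤ) : ℂ) * r ^ kl.2)
          = (((a kl.1 : ℤ) * p.coeff kl.2 : ℤ) : ℂ) * r ^ n := by
        intro kl hkl
        rw [Finset.HasAntidiagonal.mem_antidiagonal] at hkl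
        push_cast
        rw [← hkl, pow_add]
        ring
      rw [Finset.sum_congr rfl hstep, ← Finset.sum_mul]
      have := hc n
      rw [show (∑ kl ∈ Finset.HasAntidiagonal.antidiagonal n, (((a kl.1 : ℤ) * p.coeff kl.2 : ℤ) : ℂ))
          = (((∑ kl ∈ Finset.HasAntidiagonal.antidiagonal n, (a kl.1 : ℤ) * p.coeff kl.2 : ℤ)) : ℂ) by
        push_cast; ring]
      rw [this]
      by_cases hn0 : n = 0
      · subst hn0; simp
      · simp [hn0]
    rw [tsum_congr hterm]
    exact tsum_ite_eq 0 1
  rw [hg0, mul_zero, hrhs] at hprod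
  exact one_ne_zero hprod.symm
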